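/- arXiv:1803.08714 — 4 statements merged into one kernel-verified Lean document; each statement's English description precedes it below -/
import Mathlib

section
/- Let V = ℝ², M = ℝ × {0}, Q(x,y) = -∞ if y ≤ 0 and Q(x,y) = 0 if y > 0, and ℓ(x,0) = x. Then ℓ ≥ Q on M, but there exists no linear map L : ℝ² → ℝ such that L = ℓ on M and L(v) ≥ Q(v) for all v ∈ ℝ². -/
/-- The superlinear function `Q(x,y) = 0` if `y > 0`, `-∞` if `y ≤ 0`. -/
noncomputable def Q : ℝ × ℝ → EReal := fun v => if 0 < v.2 then (0 : EReal) else ⊥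

/-- `ℓ(x,0) = x` dominates `Q` on `M = ℝ × {0}`, but there is no linear
`L : ℝ² → ℝ` extending `ℓ` with `L ≥ Q` everywhere. -/
theorem stmt_1 :
    (∀ x : ℝ, Q (x, 0) ≤ ((x : ℝ) : EReal)) ∧
    ¬ ∃ L : ℝ × ℝ →ₗ[ℝ] ℝ, (∀ x : ℝ, L (x, 0) = x) ∧
      ∀ v : ℝ × ℝ, Q v ≤ ((L v : ℝ) : EReal) := by
  constructor
  · intro x
    simp [Q]
  · rintro ⟨L, hext, hdom⟩
    have key : ∀ x : ℝ, (0 : ℝ) ≤ L (x, 1) := by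
      intro x
      have := hdom (x, 1)
      simp only [Q, show (0:ℝ) < 1 by norm_num, if_true] at this
      exact_mod_cast this
    set c := L (0, 1) with hc
    have hx : ∀ x : ℝ, L (x, 1) = x + c := by
      intro x
      have h : (x, (1:ℝ)) = (x, 0) + (0, 1) := by simp
      rw [h, map_add, hext]
    have := key (-c - 1)
    rw [hx] at this
    linarith
end

section
/- Let μ be a finite positive Borel measure on ℂ with Newton potential M(w) = ∫ 1/|u - w| dμ(u). For any ζ ∈ ℂ, lim_{r→0+} (1/(π r²)) ∫_{D(ζ,r)} |w - ζ| · M(w) dL(w) = μ({ζ}). -/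
open MeasureTheory Metric ENNReal Filter

/-- The Newton potential `M_μ(z) = ∫ 1/|w - z| dμ(w)` of a measure on `ℂ`. -/
noncomputable def newtonPot (μ : Measure ℂ) (z : ℂ) : ℝ≥0∞ :=
  ∫⁻ w, (ENNReal.ofReal (‖w - z‖))⁻¹ ∂μ

lemma vol_ball_complex (a : ℂ) (r : ℝ) (hr : 0 ≤ r) :
    volume (ball a r) = ENNReal.ofReal (Real.pi * r ^ 2) := by
  rw [Complex.volume_ball, ← NNReal.coe_real_pi, ← ENNReal.ofReal_coe_nnreal,
    NNReal.coe_real_pi, ← ENNReal.ofReal_pow hr, ← ENNReal.ofReal_mul (by positivity),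
    mul_comm]

/-- Key estimate: the integral of `1/|u - w|` over a disc of radius `R` around `u`
is at most `4 π R`. -/
lemma ball_lintegral_inv_le (u : ℂ) (R : ℝ) (hR : 0 < R) :
    ∫⁻ w in ball u R, (ENNReal.ofReal (‖u - w‖))⁻¹ ∂volume
      ≤ ENNReal.ofReal (4 * Real.pi * R) := by
  set f : ℂ → ℝ≥0∞ := fun w => (ENNReal.ofReal (‖u - w‖))⁻¹ with hf
  set A : ℕ → Set ℂ := fun k => ball u (R * 2⁻¹ ^ k) \ ball u (R * 2⁻¹ ^ (k + 1)) with hA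
  have hsub : ball u R \ {u} ⊆ ⋃ k : ℕ, A k := by
    intro w hw
    obtain ⟨hw1, hw2⟩ := hw
    have hd0 : 0 < dist w u := dist_pos.2 (by simpa using hw2)
    have hdR : dist w u < R := mem_ball.1 hw1
    have hex : ∃ k : ℕ, R * 2⁻¹ ^ (k + 1) ≤ dist w u := by
      obtain ⟨n, hn⟩ := exists_pow_lt_of_lt_one (div_pos hd0 hR) (by norm_num : (2:ℝ)⁻¹ < 1)
      refine ⟨n, le_of_lt ?_⟩
      have h1 : (2:ℝ)⁻¹ ^ (n + 1) ≤ 2⁻¹ ^ n :=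
        pow_le_pow_of_le_one (by norm_num) (by norm_num) (Nat.le_succ n)
      have := (lt_div_iff₀ hR).1 (lt_of_le_of_lt h1 hn)
      linarith [this]
    refine Set.mem_iUnion.2 ⟨Nat.find hex, ?_, ?_⟩
    · rw [mem_ball]
      rcases Nat.eq_zero_or_pos (Nat.find hex) with h0 | hpos
      · rw [h0]; simpa using hdR
      · obtain ⟨m, hm⟩ := Nat.exists_eq_succ_of_ne_zero hpos.ne'
        have := Nat.find_min hex (hm ▸ Nat.lt_succ_self m)
        rw [hm]
        push_neg at this
        exact this
    · rw [mem_ball]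
      push_neg
      exact Nat.find_spec hex
  have hsing : volume ({u} : Set ℂ) = 0 := measure_singleton u
  have step1 : ∫⁻ w in ball u R, f w ∂volume = ∫⁻ w in ball u R \ {u}, f w ∂volume := by
    refine (setLIntegral_congr ?_).symm
    exact diff_ae_eq_self.2 (measure_mono_null Set.inter_subset_right hsing)
  have hAbound : ∀ k : ℕ, ∫⁻ w in A k, f w ∂volume
      ≤ ENNReal.ofReal (2 * Real.pi * R) * ENNReal.ofReal 2⁻¹ ^ k := by
    intro k
    have hrk : (0:ℝ) < R * 2⁻¹ ^ (k + 1) := by positivity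
    have hb : ∫⁻ w in A k, f w ∂volume
        ≤ ∫⁻ _ in A k, (ENNReal.ofReal (R * 2⁻¹ ^ (k + 1)))⁻¹ ∂volume := by
      refine setLIntegral_mono' (measurableSet_ball.diff measurableSet_ball) ?_
      intro w hw
      refine ENNReal.inv_le_inv' (ENNReal.ofReal_le_ofReal ?_)
      have := hw.2
      rw [mem_ball] at this
      push_neg at this
      calc R * 2⁻¹ ^ (k + 1) ≤ dist w u := this
        _ = ‖u - w‖ := by
            rw [Complex.dist_eq, norm_sub_rev]
    have hvol : volume (A k) ≤ ENNReal.ofReal (Real.pi * (R * 2⁻¹ ^ k) ^ 2) := by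
      rw [← vol_ball_complex u _ (by positivity)]
      exact measure_mono (Set.diff_subset.trans (subset_refl _))
    calc ∫⁻ w in A k, f w ∂volume
        ≤ (ENNReal.ofReal (R * 2⁻¹ ^ (k + 1)))⁻¹ * volume (A k) := by
          rw [← setLIntegral_const]; exact hb
      _ ≤ (ENNReal.ofReal (R * 2⁻¹ ^ (k + 1)))⁻¹
            * ENNReal.ofReal (Real.pi * (R * 2⁻¹ ^ k) ^ 2) := by
          exact mul_le_mul_right hvol _
      _ = ENNReal.ofReal (Real.pi * (R * 2⁻¹ ^ k) ^ 2) / ENNReal.ofReal (R * 2⁻¹ ^ (k + 1)) := by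
          rw [div_eq_mul_inv, mul_comm]
      _ = ENNReal.ofReal (Real.pi * (R * 2⁻¹ ^ k) ^ 2 / (R * 2⁻¹ ^ (k + 1))) := by
          rw [ENNReal.ofReal_div_of_pos hrk]
      _ = ENNReal.ofReal (2 * Real.pi * R * 2⁻¹ ^ k) := by
          congr 1
          have h2 : (2:ℝ)⁻¹ ^ (k+1) ≠ 0 := by positivity
          field_simp
          ring
      _ = ENNReal.ofReal (2 * Real.pi * R) * ENNReal.ofReal 2⁻¹ ^ k := by
          rw [ENNReal.ofReal_mul (by positivity), ENNReal.ofReal_pow (by norm_num)]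
  calc ∫⁻ w in ball u R, f w ∂volume
      = ∫⁻ w in ball u R \ {u}, f w ∂volume := step1
    _ ≤ ∫⁻ w in ⋃ k : ℕ, A k, f w ∂volume := lintegral_mono_set hsub
    _ ≤ ∑' k : ℕ, ∫⁻ w in A k, f w ∂volume := lintegral_iUnion_le _ _
    _ ≤ ∑' k : ℕ, ENNReal.ofReal (2 * Real.pi * R) * ENNReal.ofReal 2⁻¹ ^ k :=
        ENNReal.tsum_le_tsum hAbound
    _ = ENNReal.ofReal (2 * Real.pi * R) * ∑' k : ℕ, ENNReal.ofReal 2⁻¹ ^ k :=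
        ENNReal.tsum_mul_left
    _ = ENNReal.ofReal (2 * Real.pi * R) * 2 := by
        rw [ENNReal.tsum_geometric]
        congr 1
        rw [show (ENNReal.ofReal 2⁻¹) = 2⁻¹ by
          rw [ENNReal.ofReal_inv_of_pos (by norm_num)]; norm_num]
        rw [ENNReal.one_sub_inv_two]
        simp
    _ = ENNReal.ofReal (4 * Real.pi * R) := by
        rw [show (2:ℝ≥0∞) = ENNReal.ofReal 2 by norm_num, ← ENNReal.ofReal_mul (by positivity)]
        congr 1; ring

/-- Uniform bound on the inner integral. -/
lemma g_bound (ζ u : ℂ) (r : ℝ) (hr : 0 < r) :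
    ∫⁻ w in ball ζ r,
        ENNReal.ofReal (‖w - ζ‖) * (ENNReal.ofReal (‖u - w‖))⁻¹ ∂volume
      ≤ ENNReal.ofReal 12 * ENNReal.ofReal (Real.pi * r ^ 2) := by
  rcases le_or_gt (2 * r) (‖u - ζ‖) with hcase | hcase
  · -- far case: integrand ≤ 1
    have hpt : ∀ w ∈ ball ζ r,
        ENNReal.ofReal (‖w - ζ‖) * (ENNReal.ofReal (‖u - w‖))⁻¹ ≤ 1 := by
      intro w hw
      have h1 : ‖w - ζ‖ < r := by
        rw [mem_ball, Complex.dist_eq] at hw; exact hw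
      have h2 : r ≤ ‖u - w‖ := by
        have htri : ‖u - ζ‖ ≤ ‖u - w‖ + ‖w - ζ‖ := by
          calc ‖u - ζ‖ = ‖(u - w) + (w - ζ)‖ := by ring_nf
            _ ≤ _ := norm_add_le _ _
        linarith
      rw [← div_eq_mul_inv]
      exact ENNReal.div_le_of_le_mul (by
        rw [one_mul]; exact ENNReal.ofReal_le_ofReal (by linarith))
    calc ∫⁻ w in ball ζ r, _ ∂volume
        ≤ ∫⁻ _ in ball ζ r, (1:ℝ≥0∞) ∂volume := setLIntegral_mono' measurableSet_ball hpt
      _ = volume (ball ζ r) := by rw [setLIntegral_const, one_mul]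
      _ = ENNReal.ofReal (Real.pi * r ^ 2) := vol_ball_complex ζ r hr.le
      _ ≤ ENNReal.ofReal 12 * ENNReal.ofReal (Real.pi * r ^ 2) := by
          nth_rewrite 1 [← one_mul (ENNReal.ofReal (Real.pi * r ^ 2))]
          exact mul_le_mul_left (by norm_num) _
  · -- near case
    have hsub : ball ζ r ⊆ ball u (3 * r) := by
      intro w hw
      rw [mem_ball] at hw ⊢
      have : dist w u ≤ dist w ζ + dist ζ u := dist_triangle w ζ u
      have hd : dist ζ u = ‖u - ζ‖ := by
        rw [Complex.dist_eq, norm_sub_rev]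
      linarith
    calc ∫⁻ w in ball ζ r,
          ENNReal.ofReal (‖w - ζ‖) * (ENNReal.ofReal (‖u - w‖))⁻¹ ∂volume
        ≤ ∫⁻ w in ball ζ r,
            ENNReal.ofReal r * (ENNReal.ofReal (‖u - w‖))⁻¹ ∂volume := by
          refine setLIntegral_mono' measurableSet_ball ?_
          intro w hw
          refine mul_le_mul_left (ENNReal.ofReal_le_ofReal ?_) _
          rw [mem_ball, Complex.dist_eq] at hw
          exact hw.le
      _ = ENNReal.ofReal r
            * ∫⁻ w in ball ζ r, (ENNReal.ofReal (‖u - w‖))⁻¹ ∂volume :=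
          lintegral_const_mul' _ _ ENNReal.ofReal_ne_top
      _ ≤ ENNReal.ofReal r
            * ∫⁻ w in ball u (3 * r), (ENNReal.ofReal (‖u - w‖))⁻¹ ∂volume :=
          mul_le_mul_right (lintegral_mono_set hsub) _
      _ ≤ ENNReal.ofReal r * ENNReal.ofReal (4 * Real.pi * (3 * r)) :=
          mul_le_mul_right (ball_lintegral_inv_le u (3 * r) (by positivity)) _
      _ = ENNReal.ofReal 12 * ENNReal.ofReal (Real.pi * r ^ 2) := by
          rw [← ENNReal.ofReal_mul hr.le, ← ENNReal.ofReal_mul (by norm_num)]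
          congr 1; ring

lemma kernel_meas (ζ : ℂ) : Measurable fun p : ℂ × ℂ =>
    ENNReal.ofReal (‖p.1 - ζ‖) * (ENNReal.ofReal (‖p.2 - p.1‖))⁻¹ := by
  apply Measurable.mul
  · exact (continuous_norm.comp (continuous_fst.sub continuous_const)).measurable.ennreal_ofReal
  · exact ((continuous_norm.comp (continuous_snd.sub continuous_fst)).measurable.ennreal_ofReal).inv

lemma g_meas (ζ u₀ : ℂ) (r : ℝ) : Measurable fun u : ℂ => ∫⁻ w in ball ζ r,
    ENNReal.ofReal (‖w - ζ‖) * (ENNReal.ofReal (‖u - w‖))⁻¹ ∂volume :=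
  ((kernel_meas ζ).comp measurable_swap).lintegral_prod_right'

/-- Value of the inner integral at the center point. -/
lemma g_at_center (ζ : ℂ) (r : ℝ) (hr : 0 < r) :
    ∫⁻ w in ball ζ r,
        ENNReal.ofReal (‖w - ζ‖) * (ENNReal.ofReal (‖ζ - w‖))⁻¹ ∂volume
      = ENNReal.ofReal (Real.pi * r ^ 2) := by
  have hae : ∀ᵐ w ∂(volume.restrict (ball ζ r)),
      ENNReal.ofReal (‖w - ζ‖) * (ENNReal.ofReal (‖ζ - w‖))⁻¹
        = (1 : ℝ≥0∞) := by
    refine ae_restrict_of_ae ?_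
    have h0 : ∀ᵐ w : ℂ ∂volume, w ≠ ζ := by
      refine (ae_iff).2 ?_
      simpa using measure_singleton ζ
    filter_upwards [h0] with w hw
    have habs : ‖ζ - w‖ = ‖w - ζ‖ := by
      rw [norm_sub_rev]
    have hpos : 0 < ‖w - ζ‖ := norm_pos_iff.mpr (sub_ne_zero.2 hw)
    rw [habs]
    exact ENNReal.mul_inv_cancel (ENNReal.ofReal_pos.2 hpos).ne' ENNReal.ofReal_ne_top
  calc ∫⁻ w in ball ζ r,
        ENNReal.ofReal (‖w - ζ‖) * (ENNReal.ofReal (‖ζ - w‖))⁻¹ ∂volume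
      = ∫⁻ _ in ball ζ r, (1:ℝ≥0∞) ∂volume := lintegral_congr_ae hae
    _ = volume (ball ζ r) := by rw [setLIntegral_const, one_mul]
    _ = ENNReal.ofReal (Real.pi * r ^ 2) := vol_ball_complex ζ r hr.le

/-- For `u ≠ ζ` the normalized inner integral tends to `0`. -/
lemma g_tendsto_ne (ζ u : ℂ) (hu : u ≠ ζ) :
    Tendsto (fun r : ℝ => (∫⁻ w in ball ζ r,
        ENNReal.ofReal (‖w - ζ‖) * (ENNReal.ofReal (‖u - w‖))⁻¹ ∂volume)
          / ENNReal.ofReal (Real.pi * r ^ 2))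
      (nhdsWithin 0 (Set.Ioi 0)) (nhds 0) := by
  have hd : 0 < ‖u - ζ‖ := norm_pos_iff.mpr (sub_ne_zero.2 hu)
  set d := ‖u - ζ‖ with hdd
  have hupper : ∀ᶠ r in nhdsWithin 0 (Set.Ioi 0),
      (∫⁻ w in ball ζ r,
          ENNReal.ofReal (‖w - ζ‖) * (ENNReal.ofReal (‖u - w‖))⁻¹ ∂volume)
            / ENNReal.ofReal (Real.pi * r ^ 2)
        ≤ ENNReal.ofReal r * (ENNReal.ofReal (d / 2))⁻¹ := by
    have hsmall : ∀ᶠ r in nhdsWithin 0 (Set.Ioi 0), r < d / 2 :=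
      Filter.Eventually.filter_mono nhdsWithin_le_nhds
        (Filter.Tendsto.eventually_lt_const (by positivity) tendsto_id)
    filter_upwards [eventually_mem_nhdsWithin, hsmall] with r hr hrd
    have hc0 : ENNReal.ofReal (Real.pi * r ^ 2) ≠ 0 := by
      have : (0:ℝ) < r := hr
      exact (ENNReal.ofReal_pos.2 (by positivity)).ne'
    rw [ENNReal.div_le_iff hc0 ENNReal.ofReal_ne_top]
    calc ∫⁻ w in ball ζ r,
          ENNReal.ofReal (‖w - ζ‖) * (ENNReal.ofReal (‖u - w‖))⁻¹ ∂volume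
        ≤ ∫⁻ _ in ball ζ r, ENNReal.ofReal r * (ENNReal.ofReal (d / 2))⁻¹ ∂volume := by
          refine setLIntegral_mono' measurableSet_ball ?_
          intro w hw
          rw [mem_ball, Complex.dist_eq] at hw
          refine mul_le_mul' (ENNReal.ofReal_le_ofReal hw.le) ?_
          refine ENNReal.inv_le_inv' (ENNReal.ofReal_le_ofReal ?_)
          have htri : d ≤ ‖u - w‖ + ‖w - ζ‖ := by
            calc d = ‖(u - w) + (w - ζ)‖ := by rw [hdd]; ring_nf
              _ ≤ _ := norm_add_le _ _
          linarith
      _ = ENNReal.ofReal r * (ENNReal.ofReal (d / 2))⁻¹ * volume (ball ζ r) :=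
          setLIntegral_const _ _
      _ = ENNReal.ofReal r * (ENNReal.ofReal (d / 2))⁻¹ * ENNReal.ofReal (Real.pi * r ^ 2) := by
          rw [vol_ball_complex ζ r (le_of_lt hr)]
  refine tendsto_of_tendsto_of_tendsto_of_le_of_le' tendsto_const_nhds
    ?_ (Eventually.of_forall fun r => zero_le) hupper
  have h1 : Tendsto (fun r : ℝ => ENNReal.ofReal r) (nhdsWithin 0 (Set.Ioi 0)) (nhds 0) := by
    have h := ENNReal.continuous_ofReal.tendsto (0:ℝ)
    rw [ENNReal.ofReal_zero] at h
    exact h.mono_left nhdsWithin_le_nhds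
  have h2 := ENNReal.Tendsto.mul_const (b := (ENNReal.ofReal (d / 2))⁻¹) h1
    (Or.inr (ENNReal.inv_ne_top.2 (ENNReal.ofReal_pos.2 (by positivity)).ne'))
  simpa using h2

theorem stmt_6 (μ : Measure ℂ) [IsFiniteMeasure μ] (ζ : ℂ) :
    Tendsto (fun r : ℝ =>
        (∫⁻ w in ball ζ r, ENNReal.ofReal (‖w - ζ‖) * newtonPot μ w ∂volume)
          / ENNReal.ofReal (Real.pi * r ^ 2))
      (nhdsWithin 0 (Set.Ioi 0)) (nhds (μ {ζ})) := by
  have hc0 : ∀ r : ℝ, 0 < r → ENNReal.ofReal (Real.pi * r ^ 2) ≠ 0 := fun r hr =>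
    (ENNReal.ofReal_pos.2 (by positivity)).ne'
  -- Step 1: Tonelli
  have swap : ∀ r : ℝ,
      (∫⁻ w in ball ζ r, ENNReal.ofReal (‖w - ζ‖) * newtonPot μ w ∂volume)
        = ∫⁻ u, ∫⁻ w in ball ζ r,
            ENNReal.ofReal (‖w - ζ‖) * (ENNReal.ofReal (‖u - w‖))⁻¹
              ∂volume ∂μ := by
    intro r
    have h1 : ∀ w : ℂ, ENNReal.ofReal (‖w - ζ‖) * newtonPot μ w
        = ∫⁻ u, ENNReal.ofReal (‖w - ζ‖)
            * (ENNReal.ofReal (‖u - w‖))⁻¹ ∂μ := by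
      intro w
      rw [newtonPot, ← lintegral_const_mul' _ _ ENNReal.ofReal_ne_top]
    simp_rw [h1]
    exact lintegral_lintegral_swap ((kernel_meas ζ).aemeasurable)
  have hμζ : μ {ζ} = ∫⁻ u, Set.indicator {ζ} (1 : ℂ → ℝ≥0∞) u ∂μ :=
    (lintegral_indicator_one (measurableSet_singleton ζ)).symm
  rw [hμζ]
  have hmain : Tendsto (fun r : ℝ => ∫⁻ u, (∫⁻ w in ball ζ r,
        ENNReal.ofReal (‖w - ζ‖) * (ENNReal.ofReal (‖u - w‖))⁻¹ ∂volume)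
          / ENNReal.ofReal (Real.pi * r ^ 2) ∂μ)
      (nhdsWithin 0 (Set.Ioi 0)) (nhds (∫⁻ u, Set.indicator {ζ} (1 : ℂ → ℝ≥0∞) u ∂μ)) := by
    refine tendsto_lintegral_filter_of_dominated_convergence
      (fun _ => ENNReal.ofReal 12) ?_ ?_ ?_ ?_
    · -- measurability
      refine Eventually.of_forall fun r => ?_
      simp_rw [div_eq_mul_inv]
      exact (g_meas ζ ζ r).mul_const _
    · -- domination
      filter_upwards [eventually_mem_nhdsWithin] with r hr
      refine Eventually.of_forall fun u => ?_
      rw [ENNReal.div_le_iff (hc0 r hr) ENNReal.ofReal_ne_top]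
      exact g_bound ζ u r hr
    · simp only [lintegral_const]
      exact ENNReal.mul_ne_top ENNReal.ofReal_ne_top (measure_ne_top μ _)
    · -- pointwise limits
      refine Eventually.of_forall fun u => ?_
      by_cases hu : u = ζ
      · subst hu
        rw [Set.indicator_of_mem (Set.mem_singleton u) (1 : ℂ → ℝ≥0∞), Pi.one_apply]
        refine Tendsto.congr' ?_ tendsto_const_nhds
        filter_upwards [eventually_mem_nhdsWithin] with r hr
        rw [g_at_center u r hr, ENNReal.div_self (hc0 r hr) ENNReal.ofReal_ne_top]
      · rw [Set.indicator_of_notMem (by simpa using hu) (1 : ℂ → ℝ≥0∞)]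
        exact g_tendsto_ne ζ u hu
  refine Tendsto.congr' ?_ hmain
  filter_upwards [eventually_mem_nhdsWithin] with r hr
  rw [swap r]
  simp_rw [div_eq_mul_inv]
  exact lintegral_mul_const' _ _ (ENNReal.inv_ne_top.2 (hc0 r hr))
end

section
/- Let Ω ⊆ ℂ be a domain and ζ ∈ ∂Ω. If there exists f holomorphic on Ω, continuous on Ω ∪ {ζ}, with |f| < 1 on Ω and f(ζ) = 1 (a weak peak function at ζ), then for every sequence z_ν ∈ Ω with z_ν → ζ and every z₀ ∈ Ω, the Carathéodory distance c_Ω(z₀, z_ν) → ∞. -/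
open Filter

/-- The Möbius distance `m(a,b) = |(a - b)/(1 - ā b)|` on the unit disk. -/
noncomputable def mobiusDist (a b : ℂ) : ℝ :=
  ‖(a - b) / (1 - (starRingEnd ℂ) a * b)‖

/-- The Poincaré distance `p(a,b) = (1/2) log((1 + m(a,b))/(1 - m(a,b)))`. -/
noncomputable def poincareDist (a b : ℂ) : ℝ :=
  (1 / 2) * Real.log ((1 + mobiusDist a b) / (1 - mobiusDist a b))

/-- The Carathéodory pseudodistance of `Ω ⊆ ℂ`. -/
noncomputable def caraDist (Ω : Set ℂ) (x y : ℂ) : ℝ :=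
  sSup {t : ℝ | ∃ f : ℂ → ℂ, DifferentiableOn ℂ f Ω ∧
    (∀ z ∈ Ω, ‖f z‖ < 1) ∧ t = poincareDist (f x) (f y)}

/-- The Möbius–Carathéodory pseudodistance `c*` of `Ω ⊆ ℂ`. -/
noncomputable def caraStarDist (Ω : Set ℂ) (x y : ℂ) : ℝ :=
  sSup {t : ℝ | ∃ f : ℂ → ℂ, DifferentiableOn ℂ f Ω ∧
    (∀ z ∈ Ω, ‖f z‖ < 1) ∧ t = mobiusDist (f x) (f y)}

open Metric

local notation "conj'" => starRingEnd ℂ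

lemma abs_one_sub_conj_mul_pos {a b : ℂ} (ha : norm a < 1) (hb : norm b < 1) :
    0 < norm (1 - conj' a * b) := by
  have h : norm (conj' a * b) < 1 := by
    rw [norm_mul, Complex.norm_conj]
    calc norm a * norm b ≤ norm a * 1 :=
          mul_le_mul_of_nonneg_left hb.le (norm_nonneg a)
      _ < 1 := by simpa using ha
  have : (1 : ℂ) - conj' a * b ≠ 0 := by
    intro h0
    have : (1:ℂ) = conj' a * b := by linear_combination h0
    rw [← this] at h; simp at h
  exact norm_pos_iff.mpr this

lemma normSq_identity (a b : ℂ) :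
    Complex.normSq (1 - conj' a * b) - Complex.normSq (a - b)
      = (1 - Complex.normSq a) * (1 - Complex.normSq b) := by
  have h1 : ((Complex.normSq (1 - conj' a * b) : ℂ)) = (1 - conj' a * b) * conj' (1 - conj' a * b) :=
    (Complex.mul_conj _).symm
  have h2 : ((Complex.normSq (a - b) : ℂ)) = (a - b) * conj' (a - b) := (Complex.mul_conj _).symm
  have h3 : ((Complex.normSq a : ℂ)) = a * conj' a := (Complex.mul_conj _).symm
  have h4 : ((Complex.normSq b : ℂ)) = b * conj' b := (Complex.mul_conj _).symm
  have : ((Complex.normSq (1 - conj' a * b) - Complex.normSq (a - b) : ℝ) : ℂ)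
      = ((1 - Complex.normSq a) * (1 - Complex.normSq b) : ℝ) := by
    push_cast
    rw [h1, h2, h3, h4]
    simp only [map_sub, map_mul, map_one, Complex.conj_conj]
    ring
  exact_mod_cast this

lemma abs_sub_lt_abs_one_sub {a b : ℂ} (ha : norm a < 1) (hb : norm b < 1) :
    norm (a - b) < norm (1 - conj' a * b) := by
  have key := normSq_identity a b
  have hna : Complex.normSq a < 1 := by
    rw [← Complex.sq_norm]; nlinarith [norm_nonneg a]
  have hnb : Complex.normSq b < 1 := by
    rw [← Complex.sq_norm]; nlinarith [norm_nonneg b]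
  have hlt : Complex.normSq (a - b) < Complex.normSq (1 - conj' a * b) := by nlinarith
  rw [← Complex.sq_norm, ← Complex.sq_norm] at hlt
  exact lt_of_pow_lt_pow_left₀ 2 (norm_nonneg _) hlt

lemma mobiusDist_eq (a b : ℂ) :
    mobiusDist a b = norm (a - b) / norm (1 - conj' a * b) := by
  rw [mobiusDist, norm_div]

lemma mobiusDist_lt_one {a b : ℂ} (ha : norm a < 1) (hb : norm b < 1) :
    mobiusDist a b < 1 := by
  rw [mobiusDist_eq]
  exact (div_lt_one (abs_one_sub_conj_mul_pos ha hb)).2 (abs_sub_lt_abs_one_sub ha hb)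

lemma mobiusDist_nonneg (a b : ℂ) : 0 ≤ mobiusDist a b := norm_nonneg _

lemma mobiusDist_self (a : ℂ) : mobiusDist a a = 0 := by simp [mobiusDist]

lemma mobiusDist_symm (a b : ℂ) : mobiusDist a b = mobiusDist b a := by
  rw [mobiusDist_eq, mobiusDist_eq]
  have h1 : norm (a - b) = norm (b - a) := by
    rw [show a - b = -(b - a) by ring, norm_neg]
  have h2 : norm (1 - conj' a * b) = norm (1 - conj' b * a) := by
    rw [← Complex.norm_conj (1 - conj' a * b)]
    simp only [map_sub, map_mul, map_one, Complex.conj_conj]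
    ring_nf
  rw [h1, h2]

lemma one_sub_conj_mul_ne_zero {a b : ℂ} (ha : norm a < 1) (hb : norm b < 1) :
    (1 : ℂ) - conj' a * b ≠ 0 :=
  norm_ne_zero_iff.mp (abs_one_sub_conj_mul_pos ha hb).ne'

/-- Bound on Möbius distance from origin-normalized points. -/
lemma mobiusDist_le_ratio {a c : ℂ} (ha : norm a < 1) (hc : norm c < 1) :
    mobiusDist a c ≤ (norm a + norm c) / (1 + norm a * norm c) := by
  set x := norm a with hx
  set y := norm c with hy
  have hx0 : 0 ≤ x := norm_nonneg a
  have hy0 : 0 ≤ y := norm_nonneg c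
  have hs : (0:ℝ) < 1 + x * y := by nlinarith
  rw [mobiusDist_eq, div_le_div_iff₀ (abs_one_sub_conj_mul_pos ha hc) hs]
  -- square both sides
  have h1 : (0:ℝ) ≤ norm (a - c) * (1 + x * y) := by positivity
  have h2 : (0:ℝ) ≤ (x + y) * norm (1 - conj' a * c) := by positivity
  refine le_of_pow_le_pow_left₀ two_ne_zero h2 ?_
  have e1 : norm (a - c) ^ 2 = Complex.normSq (a - c) := Complex.sq_norm _
  have e2 : norm (1 - conj' a * c) ^ 2 = Complex.normSq (1 - conj' a * c) :=
    Complex.sq_norm _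
  have e3 : Complex.normSq (a - c) = x ^ 2 + y ^ 2 - 2 * (a * conj' c).re := by
    rw [Complex.normSq_sub]
    rw [hx, hy, ← Complex.sq_norm, ← Complex.sq_norm]
  have e4 : Complex.normSq (1 - conj' a * c) = 1 - 2 * (a * conj' c).re + x^2 * y^2 := by
    rw [Complex.normSq_sub]
    simp only [Complex.normSq_one, Complex.normSq_mul, Complex.normSq_conj]
    have : ((1 : ℂ) * conj' (conj' a * c)).re = (a * conj' c).re := by
      simp only [one_mul, map_mul, Complex.conj_conj]
    rw [this, hx, hy, ← Complex.sq_norm, ← Complex.sq_norm]; ring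
  have ht : |(a * conj' c).re| ≤ x * y := by
    calc |(a * conj' c).re| ≤ norm (a * conj' c) := Complex.abs_re_le_norm _
      _ = x * y := by rw [norm_mul, Complex.norm_conj]
  have ht1 : -(x*y) ≤ (a * conj' c).re := neg_le_of_abs_le ht
  have ht2 : (a * conj' c).re ≤ x*y := le_of_abs_le ht
  rw [mul_pow, mul_pow, e1, e2, e3, e4]
  set t := (a * conj' c).re
  have key : (x + y) ^ 2 * (1 - 2 * t + x ^ 2 * y ^ 2)
      - (x ^ 2 + y ^ 2 - 2 * t) * (1 + x * y) ^ 2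
      = 2 * (t + x * y) * ((1 - x ^ 2) * (1 - y ^ 2)) := by ring
  have hxx : (0:ℝ) ≤ 1 - x ^ 2 := by nlinarith
  have hyy : (0:ℝ) ≤ 1 - y ^ 2 := by nlinarith
  have pos : (0:ℝ) ≤ 2 * (t + x * y) * ((1 - x ^ 2) * (1 - y ^ 2)) := by
    apply mul_nonneg (by linarith) (mul_nonneg hxx hyy)
  linarith

lemma mobiusDist_invariant {a b c : ℂ} (ha : norm a < 1) (hb : norm b < 1)
    (hc : norm c < 1) :
    mobiusDist ((a - b) / (1 - conj' b * a)) ((c - b) / (1 - conj' b * c)) = mobiusDist a c := by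
  set d1 : ℂ := 1 - conj' b * a with hd1
  set d2 : ℂ := 1 - conj' b * c with hd2
  have hd1' : d1 ≠ 0 := one_sub_conj_mul_ne_zero hb ha
  have hd2' : d2 ≠ 0 := one_sub_conj_mul_ne_zero hb hc
  have hd1c : conj' d1 ≠ 0 := by
    simpa using (map_ne_zero (starRingEnd ℂ)).mpr hd1'
  have he : (1 : ℂ) - conj' b * b ≠ 0 := one_sub_conj_mul_ne_zero hb hb
  have hac : (1 : ℂ) - conj' a * c ≠ 0 := one_sub_conj_mul_ne_zero ha hc
  set A : ℂ := (a - b) / d1 with hA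
  set C : ℂ := (c - b) / d2 with hC
  have claim1 : A - C = (a - c) * (1 - conj' b * b) / (d1 * d2) := by
    rw [hA, hC, div_sub_div _ _ hd1' hd2']
    congr 1
    rw [hd1, hd2]
    ring
  have e1 : conj' d1 = 1 - b * conj' a := by
    rw [hd1]; simp only [map_sub, map_mul, map_one, Complex.conj_conj]
  have claim2 : 1 - conj' A * C = (1 - conj' a * c) * (1 - conj' b * b) / (conj' d1 * d2) := by
    rw [eq_div_iff (mul_ne_zero hd1c hd2')]
    have hconjA : conj' A = (conj' a - conj' b) / conj' d1 := by
      rw [hA, map_div₀, map_sub]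
    rw [hconjA, hC]
    field_simp
    rw [e1, hd2]
    ring
  have : (A - C) / (1 - conj' A * C) = (a - c) / (1 - conj' a * c) * (conj' d1 / d1) := by
    rw [claim1, claim2]
    field_simp
  rw [mobiusDist, this, norm_mul, norm_div (conj' d1), Complex.norm_conj,
    div_self (norm_ne_zero_iff.mpr hd1'), mul_one, mobiusDist]

/-- monotonicity of the log expression -/
lemma plog_mono {m1 m2 : ℝ} (h0 : 0 ≤ m1) (h12 : m1 ≤ m2) (h2 : m2 < 1) :
    (1/2 : ℝ) * Real.log ((1 + m1) / (1 - m1)) ≤ (1/2 : ℝ) * Real.log ((1 + m2) / (1 - m2)) := by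
  have h1 : m1 < 1 := lt_of_le_of_lt h12 h2
  apply mul_le_mul_of_nonneg_left _ (by norm_num)
  apply Real.log_le_log (div_pos (by linarith) (by linarith))
  rw [div_le_div_iff₀ (by linarith) (by linarith)]
  nlinarith

lemma mobiusDist_triangle {a b c : ℂ} (ha : norm a < 1) (hb : norm b < 1)
    (hc : norm c < 1) :
    mobiusDist a c ≤ (mobiusDist b a + mobiusDist b c) / (1 + mobiusDist b a * mobiusDist b c) := by
  set A : ℂ := (a - b) / (1 - conj' b * a) with hA
  set C : ℂ := (c - b) / (1 - conj' b * c) with hC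
  have hAabs : norm A = mobiusDist b a := by
    rw [hA, norm_div, mobiusDist_eq]
    have : norm (a - b) = norm (b - a) := by
      rw [show a - b = -(b - a) by ring, norm_neg]
    rw [this]
  have hCabs : norm C = mobiusDist b c := by
    rw [hC, norm_div, mobiusDist_eq]
    have : norm (c - b) = norm (b - c) := by
      rw [show c - b = -(b - c) by ring, norm_neg]
    rw [this]
  have hA1 : norm A < 1 := by rw [hAabs]; exact mobiusDist_lt_one hb ha
  have hC1 : norm C < 1 := by rw [hCabs]; exact mobiusDist_lt_one hb hc
  calc mobiusDist a c = mobiusDist A C := (mobiusDist_invariant ha hb hc).symm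
    _ ≤ (norm A + norm C) / (1 + norm A * norm C) :=
        mobiusDist_le_ratio hA1 hC1
    _ = (mobiusDist b a + mobiusDist b c) / (1 + mobiusDist b a * mobiusDist b c) := by
        rw [hAabs, hCabs]

lemma poincareDist_triangle {a b c : ℂ} (ha : norm a < 1) (hb : norm b < 1)
    (hc : norm c < 1) :
    poincareDist a c ≤ poincareDist a b + poincareDist b c := by
  set u := mobiusDist b a with hu
  set v := mobiusDist b c with hv
  have hu0 : 0 ≤ u := mobiusDist_nonneg _ _
  have hv0 : 0 ≤ v := mobiusDist_nonneg _ _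
  have hu1 : u < 1 := mobiusDist_lt_one hb ha
  have hv1 : v < 1 := mobiusDist_lt_one hb hc
  have hW1 : (u + v) / (1 + u * v) < 1 := by
    rw [div_lt_one (by nlinarith)]; nlinarith
  have hW0 : 0 ≤ (u + v) / (1 + u * v) := div_nonneg (by linarith) (by nlinarith)
  have htri : mobiusDist a c ≤ (u + v) / (1 + u * v) := mobiusDist_triangle ha hb hc
  have key : poincareDist a c ≤
      (1/2 : ℝ) * Real.log ((1 + (u + v) / (1 + u * v)) / (1 - (u + v) / (1 + u * v))) :=
    plog_mono (mobiusDist_nonneg _ _) htri hW1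
  have heq : (1 + (u + v) / (1 + u * v)) / (1 - (u + v) / (1 + u * v))
      = ((1 + u) / (1 - u)) * ((1 + v) / (1 - v)) := by
    have h1 : (1:ℝ) + u * v ≠ 0 := by nlinarith
    have h2 : (1:ℝ) - u ≠ 0 := by linarith
    have h3 : (1:ℝ) - v ≠ 0 := by linarith
    have h4 : (1:ℝ) + u * v - (u + v) ≠ 0 := by
      have : (1:ℝ) + u * v - (u + v) = (1 - u) * (1 - v) := by ring
      rw [this]; exact mul_ne_zero h2 h3
    field_simp
    ring
  have hlog : Real.log (((1 + u) / (1 - u)) * ((1 + v) / (1 - v)))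
      = Real.log ((1 + u) / (1 - u)) + Real.log ((1 + v) / (1 - v)) :=
    Real.log_mul (ne_of_gt (div_pos (by linarith) (by linarith)))
      (ne_of_gt (div_pos (by linarith) (by linarith)))
  have hsymm1 : poincareDist a b = (1/2 : ℝ) * Real.log ((1 + u) / (1 - u)) := by
    rw [poincareDist, mobiusDist_symm a b, hu]
  have hsymm2 : poincareDist b c = (1/2 : ℝ) * Real.log ((1 + v) / (1 - v)) := by
    rw [poincareDist, hv]
  rw [hsymm1, hsymm2]
  rw [heq, hlog] at key
  linarith

lemma schwarz_pick_local {Ω : Set ℂ} {f : ℂ → ℂ} (hΩ : IsOpen Ω)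
    (hf : DifferentiableOn ℂ f Ω) (hb : ∀ z ∈ Ω, norm (f z) < 1)
    {c : ℂ} {R : ℝ} (hR : 0 < R) (hsub : ball c R ⊆ Ω) {w : ℂ} (hw : w ∈ ball c R) :
    mobiusDist (f c) (f w) ≤ dist w c / R := by
  have hcΩ : c ∈ Ω := hsub (mem_ball_self hR)
  have hfc : norm (f c) < 1 := hb c hcΩ
  set h : ℂ → ℂ := fun lam => (f (c + lam) - f c) / (1 - conj' (f c) * f (c + lam)) with hh
  have hmem : ∀ lam ∈ ball (0 : ℂ) R, c + lam ∈ Ω := by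
    intro lam hlam
    apply hsub
    rw [mem_ball] at hlam ⊢
    simpa [dist_eq_norm] using hlam
  have hdiff : DifferentiableOn ℂ h (ball (0 : ℂ) R) := by
    have hcomp : DifferentiableOn ℂ (fun lam => f (c + lam)) (ball (0 : ℂ) R) := by
      apply DifferentiableOn.comp hf
      · exact (differentiable_id.const_add c).differentiableOn
      · intro lam hlam; exact hmem lam hlam
    apply DifferentiableOn.div
    · exact hcomp.sub (differentiableOn_const _)
    · exact (differentiableOn_const _).sub ((differentiableOn_const _).mul hcomp)
    · intro lam hlam
      exact one_sub_conj_mul_ne_zero hfc (hb _ (hmem lam hlam))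
  have h0 : h 0 = 0 := by simp [hh]
  have habs : ∀ lam, c + lam ∈ Ω → norm (h lam) = mobiusDist (f c) (f (c + lam)) := by
    intro lam _
    rw [hh, mobiusDist_eq, norm_div]
    congr 1
    rw [show f (c + lam) - f c = -(f c - f (c + lam)) by ring, norm_neg]
  have hmaps : Set.MapsTo h (ball (0 : ℂ) R) (ball (h 0) 1) := by
    intro lam hlam
    rw [h0, mem_ball, dist_zero_right,
      habs lam (hmem lam hlam)]
    exact mobiusDist_lt_one hfc (hb _ (hmem lam hlam))
  have hz : w - c ∈ ball (0 : ℂ) R := by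
    rw [mem_ball, dist_zero_right]
    simpa [Complex.dist_eq] using hw
  have key := Complex.dist_le_div_mul_dist_of_mapsTo_ball hdiff (hmaps.mono_right ball_subset_closedBall) hz
  rw [h0, dist_zero_right, dist_zero_right] at key
  have hcw : c + (w - c) = w := by ring
  have : norm (h (w - c)) = mobiusDist (f c) (f w) := by
    rw [habs (w - c) (by rw [hcw]; exact hsub hw), hcw]
  rw [this] at key
  calc mobiusDist (f c) (f w) ≤ 1 / R * norm (w - c) := key
    _ = dist w c / R := by rw [Complex.dist_eq]; ring

lemma plog_le_one {m : ℝ} (h0 : 0 ≤ m) (h : m ≤ 1/2) :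
    (1/2 : ℝ) * Real.log ((1 + m) / (1 - m)) ≤ 1 := by
  have h3 : (1 + m) / (1 - m) ≤ 3 := by
    rw [div_le_iff₀ (by linarith)]; linarith
  have := Real.log_le_sub_one_of_pos (show (0:ℝ) < (1+m)/(1-m) by
    apply div_pos <;> linarith)
  have hlog : Real.log ((1 + m) / (1 - m)) ≤ 2 := by linarith
  linarith

lemma poincare_small {Ω : Set ℂ} {f : ℂ → ℂ} (hΩ : IsOpen Ω)
    (hf : DifferentiableOn ℂ f Ω) (hb : ∀ z ∈ Ω, norm (f z) < 1)
    {c : ℂ} {R : ℝ} (hR : 0 < R) (hsub : ball c R ⊆ Ω) {w : ℂ} (hw : w ∈ ball c (R/2)) :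
    poincareDist (f c) (f w) ≤ 1 := by
  have hw' : w ∈ ball c R := by
    apply ball_subset_ball (by linarith) hw
  have hm := schwarz_pick_local hΩ hf hb hR hsub hw'
  have hm2 : mobiusDist (f c) (f w) ≤ 1/2 := by
    have : dist w c / R ≤ 1/2 := by
      rw [div_le_iff₀ hR]
      have := mem_ball.mp hw
      linarith
    linarith
  exact plog_le_one (mobiusDist_nonneg _ _) hm2

lemma poincare_symm (a b : ℂ) : poincareDist a b = poincareDist b a := by
  rw [poincareDist, poincareDist, mobiusDist_symm]

lemma cara_bound {Ω : Set ℂ} (hΩ : IsOpen Ω) (hc : IsConnected Ω)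
    {x y : ℂ} (hx : x ∈ Ω) (hy : y ∈ Ω) :
    ∃ C : ℝ, ∀ f : ℂ → ℂ, DifferentiableOn ℂ f Ω → (∀ z ∈ Ω, norm (f z) < 1) →
      poincareDist (f x) (f y) ≤ C := by
  set P : ℂ → Prop := fun w => ∃ C : ℝ, ∀ f : ℂ → ℂ, DifferentiableOn ℂ f Ω →
    (∀ z ∈ Ω, norm (f z) < 1) → poincareDist (f x) (f w) ≤ C with hP
  set U : Set ℂ := {w | w ∈ Ω ∧ P w} with hU
  set V : Set ℂ := {w | w ∈ Ω ∧ ¬ P w} with hV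
  have hUopen : IsOpen U := by
    rw [Metric.isOpen_iff]
    rintro w ⟨hwΩ, C, hC⟩
    obtain ⟨r, hr, hrsub⟩ := Metric.isOpen_iff.mp hΩ w hwΩ
    refine ⟨r/2, by linarith, ?_⟩
    intro u hu
    have huΩ : u ∈ Ω := hrsub (ball_subset_ball (by linarith) hu)
    refine ⟨huΩ, C + 1, ?_⟩
    intro f hf hb
    calc poincareDist (f x) (f u)
        ≤ poincareDist (f x) (f w) + poincareDist (f w) (f u) :=
          poincareDist_triangle (hb x hx) (hb w hwΩ) (hb u huΩ)
      _ ≤ C + 1 := add_le_add (hC f hf hb) (poincare_small hΩ hf hb hr hrsub hu)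
  have hVopen : IsOpen V := by
    rw [Metric.isOpen_iff]
    rintro w ⟨hwΩ, hnP⟩
    obtain ⟨r, hr, hrsub⟩ := Metric.isOpen_iff.mp hΩ w hwΩ
    refine ⟨r/2, by linarith, ?_⟩
    intro u hu
    have huΩ : u ∈ Ω := hrsub (ball_subset_ball (by linarith) hu)
    refine ⟨huΩ, ?_⟩
    rintro ⟨C, hC⟩
    apply hnP
    refine ⟨C + 1, ?_⟩
    intro f hf hb
    calc poincareDist (f x) (f w)
        ≤ poincareDist (f x) (f u) + poincareDist (f u) (f w) :=
          poincareDist_triangle (hb x hx) (hb u huΩ) (hb w hwΩ)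
      _ ≤ C + 1 := by
          have : poincareDist (f u) (f w) = poincareDist (f w) (f u) := poincare_symm _ _
          rw [this]
          exact add_le_add (hC f hf hb) (poincare_small hΩ hf hb hr hrsub hu)
  have hxy : Ω ⊆ U ∪ V := by
    intro w hw
    by_cases hPw : P w
    · exact Or.inl ⟨hw, hPw⟩
    · exact Or.inr ⟨hw, hPw⟩
  have hxU : x ∈ U := by
    refine ⟨hx, 0, ?_⟩
    intro f hf hb
    rw [poincareDist, mobiusDist_self]
    norm_num
  by_contra hnot
  push_neg at hnot
  have hyV : y ∈ V := by
    refine ⟨hy, ?_⟩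
    rintro ⟨C, hC⟩
    obtain ⟨f, hf, hb, hgt⟩ := hnot C
    exact absurd (hC f hf hb) (not_le.mpr hgt)
  have := hc.isPreconnected U V hUopen hVopen hxy ⟨x, hx, hxU⟩ ⟨y, hy, hyV⟩
  obtain ⟨w, _, ⟨_, hPw⟩, ⟨_, hnPw⟩⟩ := this
  exact hnPw hPw

theorem stmt_11 (Ω : Set ℂ) (hΩ : IsOpen Ω) (hc : IsConnected Ω)
    (ζ : ℂ) (hζ : ζ ∈ frontier Ω)
    (hpeak : ∃ f : ℂ → ℂ, DifferentiableOn ℂ f Ω ∧ ContinuousOn f (Ω ∪ {ζ}) ∧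
      (∀ z ∈ Ω, ‖f z‖ < 1) ∧ f ζ = 1) :
    ∀ z : ℕ → ℂ, (∀ ν, z ν ∈ Ω) → Tendsto z atTop (nhds ζ) →
      ∀ z₀ ∈ Ω, Tendsto (fun ν => caraDist Ω z₀ (z ν)) atTop atTop := by
  obtain ⟨f, hf, hcont, hb, hfζ⟩ := hpeak
  intro z hzmem hz z₀ hz₀
  set a := f z₀ with ha
  have haabs : norm a < 1 := hb z₀ hz₀
  -- f (z ν) → 1
  have hf1 : Tendsto (fun ν => f (z ν)) atTop (nhds 1) := by
    have hζ' : ζ ∈ Ω ∪ {ζ} := Or.inr rfl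
    have hcw : ContinuousWithinAt f (Ω ∪ {ζ}) ζ := hcont ζ hζ'
    have hzw : Tendsto z atTop (nhdsWithin ζ (Ω ∪ {ζ})) :=
      tendsto_nhdsWithin_iff.mpr ⟨hz, Eventually.of_forall fun ν => Or.inl (hzmem ν)⟩
    simpa [hfζ, Function.comp_def] using hcw.tendsto.comp hzw
  -- mobiusDist a (f (z ν)) → 1
  have hden : (1 : ℂ) - conj' a * 1 ≠ 0 := by
    intro h0
    have : conj' a = 1 := by linear_combination -h0
    have : norm (conj' a) = 1 := by rw [this]; simp
    rw [Complex.norm_conj] at this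
    rw [this] at haabs; exact lt_irrefl _ haabs
  have hmlim : Tendsto (fun ν => mobiusDist a (f (z ν))) atTop (nhds 1) := by
    have hcontm : Tendsto (fun w : ℂ => mobiusDist a w) (nhds 1) (nhds (mobiusDist a 1)) := by
      unfold mobiusDist
      apply continuous_norm.continuousAt.tendsto.comp
      apply Tendsto.div
      · exact (continuous_const.sub continuous_id).tendsto 1
      · exact (continuous_const.sub (continuous_const.mul continuous_id)).tendsto 1
      · exact hden
    have hm1 : mobiusDist a 1 = 1 := by
      rw [mobiusDist_eq]
      have : norm (a - 1) = norm (1 - conj' a * 1) := by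
        rw [mul_one, ← Complex.norm_conj (a - 1)]
        simp only [map_sub, map_one]
        rw [show conj' a - 1 = -(1 - conj' a) by ring, norm_neg]
      rw [this]
      exact div_self (norm_ne_zero_iff.mpr hden)
    rw [← hm1]
    exact hcontm.comp hf1
  -- poincareDist a (f (z ν)) → ∞
  have hmlt : ∀ ν, mobiusDist a (f (z ν)) < 1 := fun ν =>
    mobiusDist_lt_one haabs (hb _ (hzmem ν))
  have hplim : Tendsto (fun ν => poincareDist a (f (z ν))) atTop atTop := by
    have h1 : Tendsto (fun ν => 1 - mobiusDist a (f (z ν))) atTop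
        (nhdsWithin 0 (Set.Ioi 0)) := by
      apply tendsto_nhdsWithin_iff.mpr
      constructor
      · have := hmlim.const_sub 1
        simpa using this
      · exact Eventually.of_forall fun ν => by
          simp only [Set.mem_Ioi, sub_pos]; exact hmlt ν
    have hinv : Tendsto (fun ν => (1 - mobiusDist a (f (z ν)))⁻¹) atTop atTop :=
      tendsto_inv_nhdsGT_zero.comp h1
    have hnum : Tendsto (fun ν => 1 + mobiusDist a (f (z ν))) atTop (nhds 2) := by
      have := hmlim.const_add 1
      norm_num at this
      exact this
    have hquot : Tendsto (fun ν => (1 + mobiusDist a (f (z ν))) / (1 - mobiusDist a (f (z ν))))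
        atTop atTop := by
      simpa [div_eq_mul_inv] using
        Filter.Tendsto.pos_mul_atTop (by norm_num : (0:ℝ) < 2) hnum hinv
    have hlog := Real.tendsto_log_atTop.comp hquot
    have := hlog.const_mul_atTop (by norm_num : (0:ℝ) < 1/2)
    simpa [poincareDist, Function.comp, mul_comm] using this
  -- lower bound via sSup
  apply tendsto_atTop_mono _ hplim
  intro ν
  have memS : poincareDist a (f (z ν)) ∈ {t : ℝ | ∃ g : ℂ → ℂ, DifferentiableOn ℂ g Ω ∧
      (∀ w ∈ Ω, norm (g w) < 1) ∧ t = poincareDist (g z₀) (g (z ν))} :=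
    ⟨f, hf, hb, rfl⟩
  have bdd : BddAbove {t : ℝ | ∃ g : ℂ → ℂ, DifferentiableOn ℂ g Ω ∧
      (∀ w ∈ Ω, norm (g w) < 1) ∧ t = poincareDist (g z₀) (g (z ν))} := by
    obtain ⟨C, hC⟩ := cara_bound hΩ hc hz₀ (hzmem ν)
    refine ⟨C, ?_⟩
    rintro t ⟨g, hg, hgb, rfl⟩
    exact hC g hg hgb
  exact le_csSup bdd memS
end

section
/- Let ζ ∈ ℂ, r_j → 0, and suppose K_j ⊆ D(ζ, r_j) are compact sets with holomorphic functions f_j : (ℂ∪{∞}) \ K_j → 𝔻, f_j(∞) = 0, and f_j'(∞)/r_j ≥ α > 0 for all large j. Define g_j(z) = (z - ζ) f_j(z) / f_j'(∞). Then for every z in the domain of g_j with |z - ζ| ≥ r_j, one has |g_j(z)| ≤ r_j / f_j'(∞), and consequently |g_j| ≤ 2/α on its domain for all large j, while g_j(∞) = 1. -/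
open Filter Metric

private lemma tendsto_shift_inv_cobounded (ζ : ℂ) (r : ℝ) (hr : 0 < r) :
    Tendsto (fun w : ℂ => ζ + (r : ℂ) / w) (nhdsWithin 0 {(0:ℂ)}ᶜ) (Bornology.cobounded ℂ) := by
  have hr' : (r : ℂ) ≠ 0 := by exact_mod_cast hr.ne'
  have h1 : Tendsto (fun w : ℂ => (r : ℂ) / w) (nhdsWithin 0 {(0:ℂ)}ᶜ) (Bornology.cobounded ℂ) := by
    simpa [div_eq_mul_inv, Function.comp_def] using
      (tendsto_mul_left_cobounded hr').comp tendsto_inv₀_nhdsNE_zero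
  rw [← tendsto_norm_atTop_iff_cobounded] at h1 ⊢
  have h2 : Tendsto (fun w : ℂ => ‖(r : ℂ) / w‖ - ‖ζ‖) (nhdsWithin 0 {(0:ℂ)}ᶜ) atTop :=
    tendsto_atTop_add_const_right _ _ h1
  refine tendsto_atTop_mono (fun w => ?_) h2
  have := norm_sub_norm_le ((r : ℂ) / w) (-ζ)
  simp only [norm_neg] at this
  calc ‖(r:ℂ)/w‖ - ‖ζ‖ ≤ ‖(r:ℂ)/w - (-ζ)‖ := this
    _ = ‖ζ + (r:ℂ)/w‖ := by ring_nf

private lemma key_bound (ζ : ℂ) (r : ℝ) (hr : 0 < r) (K : Set ℂ) (hK : IsCompact K)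
    (hKb : K ⊆ Metric.ball ζ r) (f : ℂ → ℂ) (hf : DifferentiableOn ℂ f Kᶜ)
    (hfD : ∀ z ∈ Kᶜ, ‖f z‖ < 1) (d : ℂ)
    (hd : Tendsto (fun z => (z - ζ) * f z) (cocompact ℂ) (nhds d)) :
    ∀ z ∈ Kᶜ, r ≤ ‖z - ζ‖ → ‖(z - ζ) * f z‖ ≤ r := by
  intro z hz hzr
  have hKopen : IsOpen Kᶜ := (hK.isClosed).isOpen_compl
  have hr' : (r : ℂ) ≠ 0 := by exact_mod_cast hr.ne'
  rcases eq_or_lt_of_le hzr with heq | hlt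
  · -- boundary case |z - ζ| = r
    rw [norm_mul]
    calc ‖z-ζ‖ * ‖f z‖ ≤ ‖z-ζ‖ * 1 :=
          mul_le_mul_of_nonneg_left (hfD z hz).le (norm_nonneg _)
      _ = ‖z-ζ‖ := mul_one _
      _ = r := heq.symm
  · -- interior case |z - ζ| > r
    set F : ℂ → ℂ := fun w => if w = 0 then d else ((r : ℂ) / w) * f (ζ + (r : ℂ) / w) with hF
    have hzne : z - ζ ≠ 0 := by
      intro h; rw [h] at hlt; simp at hlt; linarith
    -- points ζ + r/w with 0 < |w| ≤ 1 lie outside K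
    have hmem : ∀ w : ℂ, w ≠ 0 → ‖w‖ ≤ 1 → (ζ + (r : ℂ) / w) ∈ Kᶜ := by
      intro w hw hw1 hmemK
      have hwpos : 0 < ‖w‖ := norm_pos_iff.mpr hw
      have hdist : dist (ζ + (r:ℂ)/w) ζ = r / ‖w‖ := by
        rw [Complex.dist_eq]
        have h : ζ + (r:ℂ)/w - ζ = (r:ℂ)/w := by ring
        rw [h, norm_div, Complex.norm_real, Real.norm_eq_abs, abs_of_pos hr]
      have hlt' : r / ‖w‖ < r := by
        have := Metric.mem_ball.mp (hKb hmemK)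
        rwa [hdist] at this
      have hge : r ≤ r / ‖w‖ := by
        rw [le_div_iff₀ hwpos]
        nlinarith
      linarith
    -- F is differentiable on the punctured unit ball
    have hFdiff : ∀ w : ℂ, w ≠ 0 → ‖w‖ < 1 → DifferentiableAt ℂ F w := by
      intro w hw hw1
      have hmem' : (ζ + (r : ℂ) / w) ∈ Kᶜ := hmem w hw hw1.le
      have hfd : DifferentiableAt ℂ f (ζ + (r : ℂ) / w) :=
        (hf.differentiableAt (hKopen.mem_nhds hmem'))
      have hG : DifferentiableAt ℂ (fun w => ((r : ℂ) / w) * f (ζ + (r : ℂ) / w)) w := by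
        have h1 : DifferentiableAt ℂ (fun w : ℂ => (r : ℂ) / w) w :=
          (differentiableAt_const _).div differentiableAt_id hw
        have h2 : DifferentiableAt ℂ (fun w : ℂ => ζ + (r : ℂ) / w) w :=
          (differentiableAt_const _).add h1
        exact h1.mul (hfd.comp w h2)
      refine hG.congr_of_eventuallyEq ?_
      filter_upwards [isOpen_compl_singleton.mem_nhds hw] with x hx
      rw [Set.mem_compl_singleton_iff] at hx
      simp only [F, if_neg hx]
    -- F is continuous at 0
    have hFcont : ContinuousAt F 0 := by
      have hco : Tendsto (fun w : ℂ => ζ + (r : ℂ) / w) (nhdsWithin 0 {(0:ℂ)}ᶜ)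
          (cocompact ℂ) := by
        rw [← Metric.cobounded_eq_cocompact]
        exact tendsto_shift_inv_cobounded ζ r hr
      have h1 : Tendsto F (nhdsWithin 0 {(0:ℂ)}ᶜ) (nhds d) := by
        have h2 := hd.comp hco
        refine h2.congr' ?_
        filter_upwards [self_mem_nhdsWithin] with w hw
        simp only [Function.comp, F, if_neg (Set.mem_compl_singleton_iff.mp hw)]
        ring_nf
      have hF0 : F 0 = d := by simp [F]
      have h3 : Tendsto F (nhds 0) (nhds d) := by
        rw [← nhdsNE_sup_pure (0:ℂ), tendsto_sup]
        exact ⟨h1, hF0 ▸ (tendsto_pure_pure F 0).mono_right (pure_le_nhds _)⟩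
      rw [ContinuousAt, hF0]
      exact h3
    have hFdiffOn : DifferentiableOn ℂ F (Metric.ball (0:ℂ) 1) := by
      rw [← Complex.differentiableOn_compl_singleton_and_continuousAt_iff
        (Metric.ball_mem_nhds (0:ℂ) one_pos)]
      constructor
      · intro w hw
        obtain ⟨hw1, hw0⟩ := hw
        exact (hFdiff w hw0 (by simpa [Complex.norm_def] using mem_ball_zero_iff.mp hw1)).differentiableWithinAt
      · exact hFcont
    -- apply max modulus on balls of radius s < 1
    set w₀ : ℂ := (r : ℂ) / (z - ζ) with hw₀
    have hw₀ne : w₀ ≠ 0 := div_ne_zero hr' hzne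
    have hw₀abs : ‖w₀‖ = r / ‖z - ζ‖ := by
      rw [hw₀, norm_div, Complex.norm_real, Real.norm_eq_abs, abs_of_pos hr]
    have hw₀lt : ‖w₀‖ < 1 := by
      rw [hw₀abs, div_lt_one (lt_trans hr hlt)]; exact hlt
    have hbound : ∀ s : ℝ, ‖w₀‖ ≤ s → s < 1 → ‖F w₀‖ ≤ r / s := by
      intro s hs1 hs2
      have hspos : 0 < s := lt_of_lt_of_le (by simpa [norm_pos_iff] using hw₀ne) hs1
      refine Complex.norm_le_of_forall_mem_frontier_norm_le (Metric.isBounded_ball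
        (x := (0:ℂ)) (r := s)) ?_ ?_ ?_
      · constructor
        · exact hFdiffOn.mono (Metric.ball_subset_ball hs2.le)
        · refine hFdiffOn.continuousOn.mono ?_
          rw [closure_ball (0:ℂ) hspos.ne']
          exact Metric.closedBall_subset_ball hs2
      · intro w hw
        rw [frontier_ball (0:ℂ) hspos.ne'] at hw
        have hwabs : ‖w‖ = s := by simpa [Complex.dist_eq] using hw
        have hwne : w ≠ 0 := by
          intro h; rw [h] at hwabs; simp at hwabs; linarith
        have hwmem := hmem w hwne (by rw [hwabs]; exact hs2.le)
        have : ‖F w‖ = (r / s) * ‖f (ζ + (r:ℂ)/w)‖ := by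
          simp only [F, if_neg hwne, norm_mul, norm_div,
            Complex.norm_real, Real.norm_eq_abs, abs_of_pos hr, hwabs]
        rw [this]
        calc (r/s) * ‖f (ζ + (r:ℂ)/w)‖ ≤ (r/s) * 1 :=
              mul_le_mul_of_nonneg_left (hfD _ hwmem).le (div_nonneg hr.le hspos.le)
          _ = r / s := mul_one _
      · rw [closure_ball (0:ℂ) hspos.ne']
        exact Metric.mem_closedBall.mpr (by simpa [Complex.dist_eq] using hs1)
    -- take s → 1⁻
    have hlim : ‖F w₀‖ ≤ r := by
      have htend : Tendsto (fun s : ℝ => r / s) (nhdsWithin 1 (Set.Iio 1)) (nhds r) := by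
        have : Tendsto (fun s : ℝ => r / s) (nhds 1) (nhds (r / 1)) :=
          (tendsto_const_nhds.div tendsto_id one_ne_zero)
        simpa using this.mono_left nhdsWithin_le_nhds
      refine ge_of_tendsto htend ?_
      have h1 : ∀ᶠ s in nhdsWithin (1:ℝ) (Set.Iio 1), ‖w₀‖ ≤ s := by
        refine eventually_nhdsWithin_of_eventually_nhds ?_
        filter_upwards [eventually_gt_nhds hw₀lt] with s hs using hs.le
      filter_upwards [h1, self_mem_nhdsWithin] with s hs1 hs2
      exact hbound s hs1 hs2
    -- conclude
    have hFw₀ : F w₀ = (z - ζ) * f z := by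
      have h1 : (r : ℂ) / w₀ = z - ζ := by
        rw [hw₀]; field_simp
      simp only [F, if_neg hw₀ne, h1]
      congr 1
      rw [add_sub_cancel]
    rw [hFw₀] at hlim
    simpa using hlim

theorem stmt_14 (ζ : ℂ) (r : ℕ → ℝ) (hrpos : ∀ j, 0 < r j)
    (hr0 : Tendsto r atTop (nhds 0))
    (K : ℕ → Set ℂ) (hK : ∀ j, IsCompact (K j)) (hKb : ∀ j, K j ⊆ Metric.ball ζ (r j))
    (f : ℕ → ℂ → ℂ) (hf : ∀ j, DifferentiableOn ℂ (f j) (K j)ᶜ)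
    (hfD : ∀ j, ∀ z ∈ (K j)ᶜ, ‖f j z‖ < 1)
    (hf0 : ∀ j, Tendsto (f j) (cocompact ℂ) (nhds 0))
    (d : ℕ → ℝ) (hdpos : ∀ j, 0 < d j)
    (hd : ∀ j, Tendsto (fun z => z * f j z) (cocompact ℂ) (nhds (d j : ℂ)))
    (α : ℝ) (hα : 0 < α) (J₀ : ℕ) (hαd : ∀ j, J₀ ≤ j → α ≤ d j / r j) :
    (∀ j, ∀ z ∈ (K j)ᶜ, r j ≤ ‖z - ζ‖ →
        ‖(z - ζ) * f j z / (d j : ℂ)‖ ≤ r j / d j) ∧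
    (∃ J : ℕ, ∀ j, J ≤ j → ∀ z ∈ (K j)ᶜ,
        ‖(z - ζ) * f j z / (d j : ℂ)‖ ≤ 2 / α) ∧
    (∀ j, Tendsto (fun z => (z - ζ) * f j z / (d j : ℂ)) (cocompact ℂ) (nhds 1)) := by
  have hd' : ∀ j, Tendsto (fun z => (z - ζ) * f j z) (cocompact ℂ) (nhds ((d j : ℂ))) := by
    intro j
    have h1 : Tendsto (fun z => z * f j z - ζ * f j z) (cocompact ℂ)
        (nhds ((d j : ℂ) - ζ * 0)) := (hd j).sub ((hf0 j).const_mul ζ)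
    simpa [sub_mul] using h1
  have part1 : ∀ j, ∀ z ∈ (K j)ᶜ, r j ≤ ‖z - ζ‖ →
      ‖(z - ζ) * f j z / (d j : ℂ)‖ ≤ r j / d j := by
    intro j z hz hzr
    have := key_bound ζ (r j) (hrpos j) (K j) (hK j) (hKb j) (f j) (hf j) (hfD j)
      ((d j : ℂ)) (hd' j) z hz hzr
    rw [norm_div, Complex.norm_real, Real.norm_eq_abs, abs_of_pos (hdpos j)]
    exact div_le_div_of_nonneg_right this (hdpos j).le |>.trans_eq rfl
  refine ⟨part1, ⟨J₀, fun j hj z hz => ?_⟩, fun j => ?_⟩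
  · have hrd : r j / d j ≤ 1 / α := by
      rw [div_le_div_iff₀ (hdpos j) hα]
      have := hαd j hj
      rw [le_div_iff₀ (hrpos j)] at this
      linarith
    have h2 : (1:ℝ) / α ≤ 2 / α := by
      apply div_le_div_of_nonneg_right ?_ hα.le |>.trans_eq rfl
      · norm_num
    rcases le_or_gt (r j) (‖z - ζ‖) with h | h
    · exact (part1 j z hz h).trans (hrd.trans h2)
    · -- |z - ζ| < r j : direct bound
      rw [norm_div, Complex.norm_real, Real.norm_eq_abs, abs_of_pos (hdpos j), norm_mul]
      have hb : ‖z - ζ‖ * ‖f j z‖ ≤ r j := by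
        calc ‖z - ζ‖ * ‖f j z‖ ≤ r j * 1 :=
          mul_le_mul h.le (hfD j z hz).le (norm_nonneg _) (hrpos j).le
          _ = r j := mul_one _
      calc ‖z - ζ‖ * ‖f j z‖ / d j ≤ r j / d j :=
            div_le_div_of_nonneg_right hb (hdpos j).le |>.trans_eq rfl
        _ ≤ 2 / α := hrd.trans h2
  · have hdc : (d j : ℂ) ≠ 0 := by exact_mod_cast (hdpos j).ne'
    have := (hd' j).div_const ((d j : ℂ))
    rw [div_self hdc] at this
    exact this
end
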